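/- The antinorm of the antinorm equals the original norm: for all x ∈ V, sup{[x,y] : ‖y‖ₐ = 1} = ‖x‖, where ‖y‖ₐ = sup{[y,z] : ‖z‖ = 1}. -/

import Mathlib

/-- The antinorm associated with a norm and a symplectic form `ω`:
`anorm ω x = sup {ω x y : ‖y‖ = 1}`. -/
noncomputable def anorm {V : Type*} [NormedAddCommGroup V] [NormedSpace ℝ V]
    (ω : V →ₗ[ℝ] V →ₗ[ℝ] ℝ) (x : V) : ℝ :=
  sSup {r : ℝ | ∃ y : V, ‖y‖ = 1 ∧ r = ω x y}

/-- Birkhoff normality: `x ⊣ y` iff `‖x‖ ≤ ‖x + t • y‖` for all `t`. -/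
def BNormal {V : Type*} [NormedAddCommGroup V] [NormedSpace ℝ V] (x y : V) : Prop :=
  ∀ t : ℝ, ‖x‖ ≤ ‖x + t • y‖

/-- The antinorm of the antinorm is the original norm:
`sup {ω x y : anorm ω y = 1} = ‖x‖`. -/
theorem stmt5 {V : Type*} [NormedAddCommGroup V] [NormedSpace ℝ V]
    (hdim : Module.finrank ℝ V = 2)
    (ω : V →ₗ[ℝ] V →ₗ[ℝ] ℝ)
    (halt : ∀ x : V, ω x x = 0)
    (hnd : ∀ a : V, (∀ y : V, ω a y = 0) → a = 0) :
    ∀ x : V, sSup {r : ℝ | ∃ y : V, anorm ω y = 1 ∧ r = ω x y} = ‖x‖ := by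
  haveI : FiniteDimensional ℝ V := FiniteDimensional.of_finrank_eq_succ hdim
  haveI : Nontrivial V := Module.nontrivial_of_finrank_eq_succ hdim
  -- skew symmetry
  have hskew : ∀ x y : V, ω x y = - ω y x := by
    intro x y
    have h := halt (x + y)
    simp only [map_add, LinearMap.add_apply, halt] at h
    linarith
  -- a unit vector
  obtain ⟨z0, hz0⟩ : ∃ z : V, ‖z‖ = 1 := by
    obtain ⟨v, hv⟩ := exists_ne (0 : V)
    exact ⟨‖v‖⁻¹ • v, by
      rw [norm_smul, norm_inv, norm_norm, inv_mul_cancel₀ (norm_ne_zero_iff.2 hv)]⟩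
  -- the linear map T : V → (V →L[ℝ] ℝ), T y = (x ↦ ω x y)
  set T : V →ₗ[ℝ] (V →L[ℝ] ℝ) :=
    (LinearMap.toContinuousLinearMap :
      (V →ₗ[ℝ] ℝ) ≃ₗ[ℝ] (V →L[ℝ] ℝ)).toLinearMap.comp ω.flip with hT
  have hTapp : ∀ y x : V, T y x = ω x y := by intro y x; simp [hT]
  -- anorm's defining set is bounded above by ‖T y‖, and anorm ω y = ‖T y‖
  have hub : ∀ y : V, ∀ r ∈ {r : ℝ | ∃ z : V, ‖z‖ = 1 ∧ r = ω y z}, r ≤ ‖T y‖ := by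
    rintro y r ⟨z, hz, rfl⟩
    have : ω y z = - T y z := by rw [hTapp]; rw [hskew]
    rw [this]
    calc - T y z ≤ |T y z| := neg_le_abs _
    _ ≤ ‖T y‖ * ‖z‖ := (T y).le_opNorm z
    _ = ‖T y‖ := by rw [hz, mul_one]
  have hbdd : ∀ y : V, BddAbove {r : ℝ | ∃ z : V, ‖z‖ = 1 ∧ r = ω y z} :=
    fun y => ⟨‖T y‖, hub y⟩
  have hmem : ∀ y z : V, ‖z‖ = 1 → ω y z ≤ anorm ω y := by
    intro y z hz
    exact le_csSup (hbdd y) ⟨z, hz, rfl⟩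
  have hA : ∀ y : V, anorm ω y = ‖T y‖ := by
    intro y
    refine le_antisymm (csSup_le ⟨ω y z0, z0, hz0, rfl⟩ (hub y)) ?_
    refine ContinuousLinearMap.opNorm_le_bound _ ?_ ?_
    · -- 0 ≤ anorm ω y
      have h1 := hmem y z0 hz0
      have h2 := hmem y (-z0) (by rw [norm_neg, hz0])
      rw [map_neg] at h2
      linarith
    · intro x
      rcases eq_or_ne x 0 with rfl | hx
      · simp
      · have hu : ‖(‖x‖⁻¹ • x)‖ = 1 := by
          rw [norm_smul, norm_inv, norm_norm, inv_mul_cancel₀ (norm_ne_zero_iff.2 hx)]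
        have h1 := hmem y _ hu
        have h2 := hmem y _ (by rw [norm_neg]; exact hu)
        rw [map_neg] at h2
        have habs : |ω y (‖x‖⁻¹ • x)| ≤ anorm ω y := abs_le.2 ⟨by linarith, h1⟩
        have : T y x = ‖x‖ * (- ω y (‖x‖⁻¹ • x)) := by
          have hnx : ‖x‖ ≠ 0 := norm_ne_zero_iff.2 hx
          rw [hTapp, hskew, map_smul, smul_eq_mul]
          field_simp
        rw [this, Real.norm_eq_abs, abs_mul, abs_of_nonneg (norm_nonneg x), abs_neg, mul_comm]
        exact mul_le_mul_of_nonneg_right habs (norm_nonneg x)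
  -- T is bijective
  have hTinj : Function.Injective T := by
    rw [← LinearMap.ker_eq_bot, LinearMap.ker_eq_bot']
    intro y hy
    refine hnd y fun x => ?_
    have : T y x = 0 := by rw [hy]; rfl
    rw [hTapp, hskew] at this
    linarith
  have hTsurj : Function.Surjective T := by
    rw [← LinearMap.injective_iff_surjective_of_finrank_eq_finrank (f := T)]
    · exact hTinj
    · calc Module.finrank ℝ V = Module.finrank ℝ (Module.Dual ℝ V) :=
            Subspace.dual_finrank_eq.symm
      _ = Module.finrank ℝ (V →L[ℝ] ℝ) :=
            (LinearMap.toContinuousLinearMap :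
              (V →ₗ[ℝ] ℝ) ≃ₗ[ℝ] (V →L[ℝ] ℝ)).finrank_eq
  -- rewrite the set
  intro x
  have hset : {r : ℝ | ∃ y : V, anorm ω y = 1 ∧ r = ω x y}
      = {r : ℝ | ∃ g : V →L[ℝ] ℝ, ‖g‖ = 1 ∧ r = g x} := by
    ext r
    constructor
    · rintro ⟨y, hy, rfl⟩
      exact ⟨T y, by rw [← hA, hy], (hTapp y x).symm⟩
    · rintro ⟨g, hg, rfl⟩
      obtain ⟨y, rfl⟩ := hTsurj g
      exact ⟨y, by rw [hA, hg], hTapp y x⟩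
  rw [hset]
  -- sup over unit functionals equals the norm
  have hub2 : ∀ r ∈ {r : ℝ | ∃ g : V →L[ℝ] ℝ, ‖g‖ = 1 ∧ r = g x}, r ≤ ‖x‖ := by
    rintro r ⟨g, hg, rfl⟩
    calc g x ≤ |g x| := le_abs_self _
    _ ≤ ‖g‖ * ‖x‖ := g.le_opNorm x
    _ = ‖x‖ := by rw [hg, one_mul]
  rcases eq_or_ne x 0 with rfl | hx
  · obtain ⟨g, hg1, _⟩ := exists_dual_vector ℝ z0 (by rw [hz0]; exact one_ne_zero)
    refine le_antisymm (csSup_le ⟨(0:ℝ), g, hg1, by simp⟩ hub2) ?_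
    rw [norm_zero]
    exact le_csSup ⟨‖(0:V)‖, hub2⟩ ⟨g, hg1, by simp⟩
  · obtain ⟨g, hg1, hg2⟩ := exists_dual_vector ℝ x (norm_ne_zero_iff.2 hx)
    refine le_antisymm (csSup_le ⟨‖x‖, g, hg1, hg2.symm⟩ hub2) ?_
    exact le_csSup ⟨‖x‖, hub2⟩ ⟨g, hg1, hg2.symm⟩
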